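/- Let d be a positive integer and let W be a real d×d matrix such that Tr(exp(W∘W)) = d, where W∘W is the Hadamard (entrywise) square of W. Then W∘W is nilpotent: (W∘W)^d = 0. -/

import Mathlib

open scoped Matrix Nat

section Aux

variable {d : ℕ} (A : Matrix (Fin d) (Fin d) ℝ)

lemma aux_pow_entry_nonneg (hA : ∀ i j, 0 ≤ A i j) :
    ∀ (n : ℕ) (i j : Fin d), 0 ≤ (A ^ n) i j := by
  intro n
  induction n with
  | zero =>
    intro i j
    simp only [pow_zero, Matrix.one_apply]
    split <;> norm_num
  | succ n ih =>
    intro i j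
    rw [pow_succ, Matrix.mul_apply]
    exact Finset.sum_nonneg fun k _ => mul_nonneg (ih i k) (hA k j)

lemma aux_walk_pos (hA : ∀ i j, 0 ≤ A i j) :
    ∀ (m : ℕ) (q : ℕ → Fin d), (∀ u < m, 0 < A (q u) (q (u + 1))) →
      0 < (A ^ m) (q 0) (q m) := by
  intro m
  induction m with
  | zero =>
    intro q _
    simp [Matrix.one_apply_eq]
  | succ m ih =>
    intro q hq
    have h1 : 0 < (A ^ m) (q 0) (q m) := ih q fun u hu => hq u (Nat.lt_succ_of_lt hu)
    have h2 : 0 < A (q m) (q (m + 1)) := hq m (Nat.lt_succ_self m)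
    rw [pow_succ, Matrix.mul_apply]
    have key : (A ^ m) (q 0) (q m) * A (q m) (q (m + 1)) ≤
        ∑ k, (A ^ m) (q 0) k * A k (q (m + 1)) := by
      apply Finset.single_le_sum (f := fun k => (A ^ m) (q 0) k * A k (q (m + 1)))
        (fun k _ => mul_nonneg (aux_pow_entry_nonneg A hA m (q 0) k) (hA k (q (m + 1))))
        (Finset.mem_univ (q m))
    exact lt_of_lt_of_le (mul_pos h1 h2) key

lemma aux_path_exists :
    ∀ (n : ℕ) (i j : Fin d), (A ^ n) i j ≠ 0 →
      ∃ p : ℕ → Fin d, p 0 = i ∧ p n = j ∧ ∀ t < n, A (p t) (p (t + 1)) ≠ 0 := by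
  intro n
  induction n with
  | zero =>
    intro i j h
    refine ⟨fun _ => i, rfl, ?_, fun t ht => absurd ht (Nat.not_lt_zero t)⟩
    rw [pow_zero] at h
    by_contra hij
    exact h (Matrix.one_apply_ne hij)
  | succ n ih =>
    intro i j h
    rw [pow_succ, Matrix.mul_apply] at h
    obtain ⟨k, _, hk⟩ := Finset.exists_ne_zero_of_sum_ne_zero h
    have h1 : (A ^ n) i k ≠ 0 := fun hz => hk (by rw [hz, zero_mul])
    have h2 : A k j ≠ 0 := fun hz => hk (by rw [hz, mul_zero])
    obtain ⟨p, hp0, hpn, hpe⟩ := ih i k h1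
    refine ⟨fun t => if t ≤ n then p t else j, by simp [hp0], by simp, ?_⟩
    intro t ht
    rcases Nat.lt_succ_iff_lt_or_eq.mp ht with ht' | rfl
    · have hle : t ≤ n := le_of_lt ht'
      simpa [hle, Nat.succ_le_of_lt ht'] using hpe t ht'
    · simpa [hpn, Nat.not_succ_le_self] using h2

end Aux

/-- If `W` is a real `d × d` matrix with `Tr(exp (W ∘ W)) = d`, where `∘` is the Hadamard
(entrywise) product, then `W ∘ W` is nilpotent: `(W ∘ W) ^ d = 0`. -/
theorem hadamard_sq_nilpotent_of_trace_exp_eq (d : ℕ) (hd : 0 < d)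
    (W : Matrix (Fin d) (Fin d) ℝ)
    (hW : (NormedSpace.exp (W ⊙ W)).trace = (d : ℝ)) :
    (W ⊙ W) ^ d = 0 := by
  set A := W ⊙ W with hAdef
  have hA : ∀ i j, 0 ≤ A i j := fun i j => by
    rw [hAdef, Matrix.hadamard_apply]; exact mul_self_nonneg _
  -- trace of powers is nonneg
  have htrace_nonneg : ∀ n : ℕ, 0 ≤ (A ^ n).trace := fun n =>
    Finset.sum_nonneg fun i _ => aux_pow_entry_nonneg A hA n i i
  -- series for trace of exp
  letI : SeminormedRing (Matrix (Fin d) (Fin d) ℝ) := Matrix.linftyOpSemiNormedRing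
  letI : NormedRing (Matrix (Fin d) (Fin d) ℝ) := Matrix.linftyOpNormedRing
  letI : NormedAlgebra ℝ (Matrix (Fin d) (Fin d) ℝ) := Matrix.linftyOpNormedAlgebra
  have hexp : HasSum (fun n : ℕ => ((n ! : ℝ)⁻¹) • A ^ n) (NormedSpace.exp A) :=
    NormedSpace.exp_series_hasSum_exp' A
  have htr : HasSum (fun n : ℕ => ((n ! : ℝ)⁻¹) • (A ^ n).trace) (d : ℝ) := by
    have h := hexp.map (Matrix.traceLinearMap (Fin d) ℝ ℝ).toAddMonoidHom
      (Matrix.traceLinearMap (Fin d) ℝ ℝ).continuous_of_finiteDimensional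
    simpa [Function.comp_def, Matrix.trace_smul, hW] using h
  -- each term for n ≥ 1 is zero
  have hdiag : ∀ (k : ℕ), 1 ≤ k → ∀ i, (A ^ k) i i = 0 := by
    have h0 : ((0 ! : ℝ)⁻¹) • (A ^ 0).trace = (d : ℝ) := by
      simp [Matrix.trace_one]
    have htail : HasSum (fun n : ℕ => ((n + 1) ! : ℝ)⁻¹ • (A ^ (n + 1)).trace) 0 := by
      have := (hasSum_nat_add_iff' 1).mpr htr
      simpa [h0] using this
    have hterm : ∀ n : ℕ, ((n + 1) ! : ℝ)⁻¹ • (A ^ (n + 1)).trace = 0 := by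
      intro n
      have hle := le_hasSum htail n (fun m _ =>
        smul_nonneg (by positivity) (htrace_nonneg (m + 1)))
      have hge : 0 ≤ ((n + 1) ! : ℝ)⁻¹ • (A ^ (n + 1)).trace :=
        smul_nonneg (by positivity) (htrace_nonneg (n + 1))
      linarith
    intro k hk i
    obtain ⟨n, rfl⟩ := Nat.exists_eq_add_of_le hk
    have htr0 : (A ^ (n + 1)).trace = 0 := by
      have := hterm n
      have hfac : ((n + 1) ! : ℝ)⁻¹ ≠ 0 := by positivity
      rw [smul_eq_mul] at this
      have := mul_eq_zero.mp this
      simp only [hfac, false_or] at this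
      simpa [add_comm 1 n] using this
    have hle : (A ^ (n + 1)) i i ≤ (A ^ (n + 1)).trace :=
      Finset.single_le_sum (fun j _ => aux_pow_entry_nonneg A hA (n + 1) j j)
        (Finset.mem_univ i)
    have hge := aux_pow_entry_nonneg A hA (n + 1) i i
    rw [htr0] at hle
    have : (A ^ (n + 1)) i i = 0 := le_antisymm hle hge
    simpa [add_comm 1 n] using this
  -- now show A ^ d = 0
  ext i j
  by_contra h
  obtain ⟨p, hp0, hpd, hpe⟩ := aux_path_exists A d i j h
  -- pigeonhole: p restricted to Fin (d+1) is not injective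
  obtain ⟨s, t, hst, hpst⟩ :=
    Fintype.exists_ne_map_eq_of_card_lt (fun t : Fin (d + 1) => p t.val)
      (by simp)
  -- wlog s < t
  wlog hlt : s.val < t.val generalizing s t
  · exact this t s hst.symm hpst.symm (by omega)
  set m := t.val - s.val with hm
  have hm1 : 1 ≤ m := by omega
  have htd : t.val ≤ d := by omega
  have hwalk : 0 < (A ^ m) (p s.val) (p (s.val + m)) := by
    apply aux_walk_pos A hA m (fun u => p (s.val + u))
    intro u hu
    have hud : s.val + u < d := by omega
    have := hpe (s.val + u) hud
    have hnn := hA (p (s.val + u)) (p (s.val + u + 1))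
    have : 0 < A (p (s.val + u)) (p (s.val + u + 1)) := lt_of_le_of_ne hnn (Ne.symm this)
    simpa [add_assoc] using this
  have hsm : s.val + m = t.val := by omega
  rw [hsm, ← hpst] at hwalk
  rw [hdiag m hm1 (p s.val)] at hwalk
  exact lt_irrefl 0 hwalk
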